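/- Let X be a probability space and (T_n) a sequence of unitary operators on L²(X) induced by measure-preserving transformations (so each T_n is multiplicative on bounded functions and preserves the integral). Assume T_n → P in the weak operator topology for some orthogonal projection P. Then the range of P restricted to L^∞(X) is closed under multiplication: for all f, g ∈ im P ∩ L^∞(X), P(fg) = fg. -/

import Mathlib

open MeasureTheory
open scoped RealInnerProductSpace ENNReal NNReal

/-- If `T n` are the Koopman operators on `L²` of measure-preserving
transformations of a probability space and `T n → P` in the weak operator
topology for an orthogonal projection `P`, then the range of `P` intersected
with `L^∞` is closed under multiplication: `P (f * g) = f * g` for bounded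
`f, g` in the range of `P`. -/
theorem stmt_13 {X : Type*} [MeasurableSpace X] (μ : Measure X)
    [IsProbabilityMeasure μ]
    (τ : ℕ → X → X) (hτ : ∀ n, MeasurePreserving (τ n) μ μ)
    (T : ℕ → Lp ℝ 2 μ →L[ℝ] Lp ℝ 2 μ)
    (hT : ∀ n (f : Lp ℝ 2 μ), (T n f : X → ℝ) =ᵐ[μ] fun x => f (τ n x))
    (P : Lp ℝ 2 μ →L[ℝ] Lp ℝ 2 μ)
    (hPidem : IsIdempotentElem P)
    (hPsa : ∀ f g : Lp ℝ 2 μ, ⟪P f, g⟫ = ⟪f, P g⟫)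
    (hconv : ∀ f g : Lp ℝ 2 μ,
      Filter.Tendsto (fun n => ⟪T n f, g⟫) Filter.atTop (nhds ⟪P f, g⟫)) :
    ∀ f g h : Lp ℝ 2 μ, P f = f → P g = g →
      MemLp (f : X → ℝ) ⊤ μ → MemLp (g : X → ℝ) ⊤ μ →
      ((h : X → ℝ) =ᵐ[μ] fun x => f x * g x) → P h = h := by
  intro f g h hPf hPg hfb hgb hmul
  -- each `T n` is an isometry
  have hiso : ∀ n (u : Lp ℝ 2 μ), ‖T n u‖ = ‖u‖ := by
    intro n u
    rw [Lp.norm_def, Lp.norm_def, eLpNorm_congr_ae (hT n u)]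
    congr 1
    exact eLpNorm_comp_measurePreserving (Lp.aestronglyMeasurable u) (hτ n)
  -- weak convergence + equal norms ⇒ strong convergence on fixed vectors
  have hstrong : ∀ u : Lp ℝ 2 μ, P u = u →
      Filter.Tendsto (fun n => ‖T n u - u‖) Filter.atTop (nhds 0) := by
    intro u hu
    have h1 : Filter.Tendsto (fun n => ⟪T n u, u⟫) Filter.atTop (nhds ⟪u, u⟫) := by
      simpa [hu] using hconv u u
    have h2 : Filter.Tendsto (fun n => ‖T n u - u‖ ^ 2) Filter.atTop (nhds 0) := by
      have heq : ∀ n, ‖T n u - u‖ ^ 2 = 2 * ‖u‖ ^ 2 - 2 * ⟪T n u, u⟫ := by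
        intro n
        rw [norm_sub_sq_real, hiso n u]; ring
      simp only [heq]
      have := (h1.const_mul 2).const_sub (2 * ‖u‖ ^ 2)
      simpa [real_inner_self_eq_norm_sq] using this
    have h3 := h2.sqrt
    simp only [Real.sqrt_zero] at h3
    refine h3.congr fun n => ?_
    exact Real.sqrt_sq (norm_nonneg _)
  have hf' := hstrong f hPf
  have hg' := hstrong g hPg
  -- essential sup bounds
  set Cf : ℝ := (eLpNormEssSup (f : X → ℝ) μ).toReal with hCf
  set Cg : ℝ := (eLpNormEssSup (g : X → ℝ) μ).toReal with hCg
  have hCf0 : 0 ≤ Cf := ENNReal.toReal_nonneg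
  have hCg0 : 0 ≤ Cg := ENNReal.toReal_nonneg
  have hfbd : ∀ᵐ x ∂μ, |f x| ≤ Cf := by
    filter_upwards [ae_le_eLpNormEssSup (f := (f : X → ℝ)) (μ := μ)] with x hx
    have hlt : eLpNormEssSup (f : X → ℝ) μ < ⊤ := by
      have := hfb.2; rwa [eLpNorm_exponent_top] at this
    calc |f x| = ((‖f x‖₊ : ℝ≥0∞)).toReal := by simp [Real.norm_eq_abs]
    _ ≤ Cf := ENNReal.toReal_mono hlt.ne hx
  have hgbd : ∀ᵐ x ∂μ, |g x| ≤ Cg := by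
    filter_upwards [ae_le_eLpNormEssSup (f := (g : X → ℝ)) (μ := μ)] with x hx
    have hlt : eLpNormEssSup (g : X → ℝ) μ < ⊤ := by
      have := hgb.2; rwa [eLpNorm_exponent_top] at this
    calc |g x| = ((‖g x‖₊ : ℝ≥0∞)).toReal := by simp [Real.norm_eq_abs]
    _ ≤ Cg := ENNReal.toReal_mono hlt.ne hx
  -- key estimate
  have key : ∀ n, ‖T n h - h‖ ≤ Cf * ‖T n g - g‖ + Cg * ‖T n f - f‖ := by
    intro n
    have hfτ : ∀ᵐ x ∂μ, |f (τ n x)| ≤ Cf := (hτ n).quasiMeasurePreserving.ae hfbd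
    -- decompose T n h - h
    have hdec : ⇑(T n h - h) =ᵐ[μ]
        fun x => f (τ n x) * (g (τ n x) - g x) + (f (τ n x) - f x) * g x := by
      have h1 := Lp.coeFn_sub (T n h) h
      have h2 := hT n h
      have h3 : (fun x => (h : X → ℝ) (τ n x)) =ᵐ[μ]
          (fun x => f (τ n x) * g (τ n x)) :=
        (hτ n).quasiMeasurePreserving.ae_eq_comp hmul
      filter_upwards [h1, h2, h3, hmul] with x e1 e2 e3 e4
      simp only [Pi.sub_apply] at e1
      rw [e1, e2, e3, e4]; ring
    -- measurability helpers
    have mfτ : AEStronglyMeasurable (fun x => (f : X → ℝ) (τ n x)) μ :=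
      ((Lp.aestronglyMeasurable (T n f)).congr (hT n f))
    have mgτ : AEStronglyMeasurable (fun x => (g : X → ℝ) (τ n x)) μ :=
      ((Lp.aestronglyMeasurable (T n g)).congr (hT n g))
    have mA : AEStronglyMeasurable
        (fun x => (f : X → ℝ) (τ n x) * ((g : X → ℝ) (τ n x) - g x)) μ :=
      mfτ.mul (mgτ.sub (Lp.aestronglyMeasurable g))
    have mB : AEStronglyMeasurable
        (fun x => ((f : X → ℝ) (τ n x) - f x) * (g : X → ℝ) x) μ :=
      (mfτ.sub (Lp.aestronglyMeasurable f)).mul (Lp.aestronglyMeasurable g)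
    -- ENNReal-level bound
    have eA : eLpNorm (fun x => (f : X → ℝ) (τ n x) * ((g : X → ℝ) (τ n x) - g x)) 2 μ
        ≤ ENNReal.ofReal Cf * eLpNorm (⇑(T n g - g)) 2 μ := by
      have e1 : eLpNorm (fun x => (f : X → ℝ) (τ n x) * ((g : X → ℝ) (τ n x) - g x)) 2 μ
          ≤ eLpNorm (fun x => Cf * ((g : X → ℝ) (τ n x) - g x)) 2 μ := by
        refine eLpNorm_mono_ae ?_
        filter_upwards [hfτ] with x hx
        simp only [Real.norm_eq_abs, abs_mul, abs_of_nonneg hCf0]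
        exact mul_le_mul_of_nonneg_right hx (abs_nonneg _)
      have e2 : eLpNorm (fun x => Cf * ((g : X → ℝ) (τ n x) - g x)) 2 μ
          = ENNReal.ofReal Cf * eLpNorm (fun x => (g : X → ℝ) (τ n x) - g x) 2 μ := by
        rw [show (fun x => Cf * ((g : X → ℝ) (τ n x) - g x))
            = Cf • (fun x => (g : X → ℝ) (τ n x) - g x) by
          funext x; simp,
          eLpNorm_const_smul (F := ℝ) (𝕜 := ℝ)]
        simp [Real.enorm_eq_ofReal hCf0, ENNReal.smul_def, ENNReal.ofReal, Real.nnnorm_of_nonneg hCf0,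
          Real.toNNReal_of_nonneg hCf0]
      have e3 : eLpNorm (fun x => (g : X → ℝ) (τ n x) - g x) 2 μ
          = eLpNorm (⇑(T n g - g)) 2 μ := by
        refine eLpNorm_congr_ae ?_ |>.symm
        filter_upwards [Lp.coeFn_sub (T n g) g, hT n g] with x e1' e2'
        simp only [Pi.sub_apply] at e1'
        rw [e1', e2']
      calc _ ≤ _ := e1
      _ = _ := by rw [e2, e3]
    have eB : eLpNorm (fun x => ((f : X → ℝ) (τ n x) - f x) * (g : X → ℝ) x) 2 μ
        ≤ ENNReal.ofReal Cg * eLpNorm (⇑(T n f - f)) 2 μ := by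
      have e1 : eLpNorm (fun x => ((f : X → ℝ) (τ n x) - f x) * (g : X → ℝ) x) 2 μ
          ≤ eLpNorm (fun x => Cg * ((f : X → ℝ) (τ n x) - f x)) 2 μ := by
        refine eLpNorm_mono_ae ?_
        filter_upwards [hgbd] with x hx
        simp only [Real.norm_eq_abs, abs_mul, abs_of_nonneg hCg0]
        rw [mul_comm (|(f : X → ℝ) (τ n x) - f x|) (|g x|)]
        exact mul_le_mul_of_nonneg_right hx (abs_nonneg _)
      have e2 : eLpNorm (fun x => Cg * ((f : X → ℝ) (τ n x) - f x)) 2 μ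
          = ENNReal.ofReal Cg * eLpNorm (fun x => (f : X → ℝ) (τ n x) - f x) 2 μ := by
        rw [show (fun x => Cg * ((f : X → ℝ) (τ n x) - f x))
            = Cg • (fun x => (f : X → ℝ) (τ n x) - f x) by
          funext x; simp,
          eLpNorm_const_smul (F := ℝ) (𝕜 := ℝ)]
        simp [Real.enorm_eq_ofReal hCg0, ENNReal.smul_def, ENNReal.ofReal, Real.nnnorm_of_nonneg hCg0,
          Real.toNNReal_of_nonneg hCg0]
      have e3 : eLpNorm (fun x => (f : X → ℝ) (τ n x) - f x) 2 μ
          = eLpNorm (⇑(T n f - f)) 2 μ := by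
        refine eLpNorm_congr_ae ?_ |>.symm
        filter_upwards [Lp.coeFn_sub (T n f) f, hT n f] with x e1' e2'
        simp only [Pi.sub_apply] at e1'
        rw [e1', e2']
      calc _ ≤ _ := e1
      _ = _ := by rw [e2, e3]
    have etot : eLpNorm (⇑(T n h - h)) 2 μ
        ≤ ENNReal.ofReal Cf * eLpNorm (⇑(T n g - g)) 2 μ
          + ENNReal.ofReal Cg * eLpNorm (⇑(T n f - f)) 2 μ := by
      rw [eLpNorm_congr_ae hdec]
      calc eLpNorm (fun x => (f : X → ℝ) (τ n x) * ((g : X → ℝ) (τ n x) - g x)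
            + ((f : X → ℝ) (τ n x) - f x) * g x) 2 μ
          ≤ eLpNorm (fun x => (f : X → ℝ) (τ n x) * ((g : X → ℝ) (τ n x) - g x)) 2 μ
            + eLpNorm (fun x => ((f : X → ℝ) (τ n x) - f x) * (g : X → ℝ) x) 2 μ :=
            eLpNorm_add_le mA mB one_le_two
      _ ≤ _ := add_le_add eA eB
    -- pass to real norms
    have hfin : ENNReal.ofReal Cf * eLpNorm (⇑(T n g - g)) 2 μ
        + ENNReal.ofReal Cg * eLpNorm (⇑(T n f - f)) 2 μ ≠ ⊤ := by
      refine ENNReal.add_ne_top.2 ⟨ENNReal.mul_ne_top ENNReal.ofReal_ne_top ?_,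
        ENNReal.mul_ne_top ENNReal.ofReal_ne_top ?_⟩
      · exact (Lp.eLpNorm_lt_top (T n g - g)).ne
      · exact (Lp.eLpNorm_lt_top (T n f - f)).ne
    have := ENNReal.toReal_mono hfin etot
    rw [ENNReal.toReal_add (ENNReal.mul_ne_top ENNReal.ofReal_ne_top
        (Lp.eLpNorm_lt_top (T n g - g)).ne)
        (ENNReal.mul_ne_top ENNReal.ofReal_ne_top (Lp.eLpNorm_lt_top (T n f - f)).ne),
      ENNReal.toReal_mul, ENNReal.toReal_mul,
      ENNReal.toReal_ofReal hCf0, ENNReal.toReal_ofReal hCg0] at this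
    simpa [Lp.norm_def] using this
  -- strong convergence of T n h to h
  have hh' : Filter.Tendsto (fun n => ‖T n h - h‖) Filter.atTop (nhds 0) := by
    have hb : Filter.Tendsto (fun n => Cf * ‖T n g - g‖ + Cg * ‖T n f - f‖)
        Filter.atTop (nhds 0) := by
      have := (hg'.const_mul Cf).add (hf'.const_mul Cg)
      simpa using this
    exact squeeze_zero (fun n => norm_nonneg _) key hb
  -- weak limits agree
  have hw : ∀ k : Lp ℝ 2 μ, ⟪P h, k⟫ = ⟪h, k⟫ := by
    intro k
    have h1 := hconv h k
    have h2 : Filter.Tendsto (fun n => ⟪T n h, k⟫) Filter.atTop (nhds ⟪h, k⟫) := by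
      have h3 : Filter.Tendsto (fun n => ⟪T n h - h, k⟫) Filter.atTop (nhds 0) := by
        refine squeeze_zero_norm (fun n => ?_) (by simpa using hh'.mul_const ‖k‖)
        simpa [Real.norm_eq_abs] using abs_real_inner_le_norm (T n h - h) k
      have := h3.add (tendsto_const_nhds (x := ⟪h, k⟫))
      simp only [zero_add] at this
      refine this.congr fun n => ?_
      rw [inner_sub_left]; ring
    exact tendsto_nhds_unique h1 h2
  exact ext_inner_right ℝ hw
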